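/- Let G be an always solvable finite simple graph on n ≥ 1 vertices. Then there exists a chain of induced subgraphs G = G_0 ⊃ G_1 ⊃ ⋯ ⊃ G_{n−1} where each G_k is always solvable, |V(G_k)| = n − k, and each G_{k+1} is obtained from G_k by deleting a single vertex. -/

import Mathlib

open scoped Classical
open Matrix

/-- Closed adjacency matrix of a simple graph over GF(2): entry (i,j) is 1 iff i = j or i ~ j. -/
noncomputable def closedAdj {V : Type*} [Fintype V] (G : SimpleGraph V) :
    Matrix V V (ZMod 2) :=
  Matrix.of fun i j => if i = j ∨ G.Adj i j then 1 else 0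

/-- Nullity ν(G): dimension over GF(2) of the kernel of the closed adjacency matrix. -/
noncomputable def nu {V : Type*} [Fintype V] (G : SimpleGraph V) : ℕ :=
  Module.finrank (ZMod 2) (LinearMap.ker (closedAdj G).mulVecLin)

lemma zmod2_sq (a : ZMod 2) : a * a = a := by
  have := ZMod.pow_card a
  rwa [pow_two] at this

/-- quadratic form of a symmetric matrix over GF(2) is linear in the diagonal -/
lemma quad_symm {n : Type*} [Fintype n] (M : Matrix n n (ZMod 2)) (hM : M.IsSymm)
    (x : n → ZMod 2) :
    x ⬝ᵥ (M *ᵥ x) = ∑ i, M i i * x i := by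
  classical
  have expand : x ⬝ᵥ (M *ᵥ x)
      = ∑ p ∈ Finset.univ ×ˢ (Finset.univ : Finset n), x p.1 * (M p.1 p.2 * x p.2) := by
    rw [Finset.sum_product]
    simp [dotProduct, Matrix.mulVec, Finset.mul_sum]
  rw [expand]
  have hsplit : (Finset.univ ×ˢ (Finset.univ : Finset n))
      = (Finset.univ ×ˢ Finset.univ).filter (fun p => p.1 = p.2)
        ∪ (Finset.univ ×ˢ Finset.univ).filter (fun p => ¬ p.1 = p.2) :=
    (Finset.filter_union_filter_not_eq _ _).symm
  rw [hsplit, Finset.sum_union (Finset.disjoint_filter_filter_not _ _ _)]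
  have h1 : ∑ p ∈ (Finset.univ ×ˢ Finset.univ).filter (fun p : n × n => p.1 = p.2),
      x p.1 * (M p.1 p.2 * x p.2) = ∑ i, M i i * x i := by
    rw [Finset.sum_filter, Finset.sum_product]
    simp only [Finset.sum_ite_eq, Finset.mem_univ, if_true]
    refine Finset.sum_congr rfl fun i _ => ?_
    calc x i * (M i i * x i) = M i i * (x i * x i) := by ring
      _ = M i i * x i := by rw [zmod2_sq]
  have h2 : ∑ p ∈ (Finset.univ ×ˢ Finset.univ).filter (fun p : n × n => ¬ p.1 = p.2),
      x p.1 * (M p.1 p.2 * x p.2) = 0 := by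
    apply Finset.sum_involution (fun p _ => (p.2, p.1))
    · intro p hp
      have hsym : M p.2 p.1 = M p.1 p.2 := by
        have := congrFun (congrFun hM p.1) p.2
        simpa [Matrix.transpose_apply] using this
      have heq : x p.2 * (M p.2 p.1 * x p.1) = x p.1 * (M p.1 p.2 * x p.2) := by
        rw [hsym]; ring
      rw [heq]
      exact CharTwo.add_self_eq_zero _
    · intro p hp _ h
      simp only [Finset.mem_filter] at hp
      exact hp.2 (congrArg Prod.fst h).symm
    · intro p hp
      simp only [Finset.mem_filter, Finset.mem_product, Finset.mem_univ, true_and] at hp ⊢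
      exact fun h => hp h.symm
    · intro p hp; rfl
  rw [h1, h2, add_zero]

lemma zmod2_cases (a : ZMod 2) : a = 0 ∨ a = 1 := by revert a; decide

/-- a symmetric invertible GF(2) matrix with all-ones diagonal has a 1 somewhere on the
diagonal of its inverse -/
lemma exists_inv_diag_one {n : Type*} [Fintype n] [Nonempty n] [DecidableEq n]
    (A : Matrix n n (ZMod 2)) (hsymm : A.IsSymm) (hdiag : ∀ i, A i i = 1)
    (hA : IsUnit A) : ∃ v, A⁻¹ v v = 1 := by
  have hdet : IsUnit A.det := (Matrix.isUnit_iff_isUnit_det _).mp hA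
  have hAB : A * A⁻¹ = 1 := Matrix.mul_nonsing_inv A hdet
  have hBA : A⁻¹ * A = 1 := Matrix.nonsing_inv_mul A hdet
  have hBsymm : (A⁻¹).IsSymm := by
    unfold Matrix.IsSymm
    rw [Matrix.transpose_nonsing_inv, hsymm]
  by_contra hno
  push_neg at hno
  have hzero : ∀ v, A⁻¹ v v = 0 := fun v => (zmod2_cases _).resolve_right (hno v)
  -- for every y, the coordinate sum of A⁻¹ *ᵥ y vanishes
  have hsum : ∀ y : n → ZMod 2, ∑ i, (A⁻¹ *ᵥ y) i = 0 := by
    intro y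
    set z := A⁻¹ *ᵥ y with hz
    have h1 : z ⬝ᵥ (A *ᵥ z) = ∑ i, z i := by
      rw [quad_symm A hsymm z]
      exact Finset.sum_congr rfl fun i _ => by rw [hdiag, one_mul]
    have h2 : A *ᵥ z = y := by
      rw [hz, Matrix.mulVec_mulVec, hAB, Matrix.one_mulVec]
    have h3 : y ⬝ᵥ z = 0 := by
      rw [hz, quad_symm A⁻¹ hBsymm y]
      exact Finset.sum_eq_zero fun i _ => by rw [hzero, zero_mul]
    rw [h2] at h1
    rw [dotProduct_comm] at h3
    rw [h3] at h1
    exact h1.symm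
  have hcol : ∀ j, ∑ i, A⁻¹ i j = 0 := by
    intro j
    have := hsum (Pi.single j 1)
    rwa [Matrix.mulVec_single_one] at this
  have hinj : Function.Injective (Matrix.vecMul · A⁻¹) := by
    rw [Matrix.vecMul_injective_iff_isUnit]
    exact ⟨⟨A⁻¹, A, hBA, hAB⟩, rfl⟩
  have hones : (fun _ => (1 : ZMod 2)) ᵥ* A⁻¹ = (0 : n → ZMod 2) ᵥ* A⁻¹ := by
    funext j
    rw [Matrix.zero_vecMul]
    show ∑ i, 1 * A⁻¹ i j = _
    simp [hcol j]
  have := congrFun (hinj hones) (Classical.arbitrary n)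
  simp at this

/-- deleting a row/column indexed by a diagonal-1 entry of the inverse keeps invertibility -/
lemma isUnit_submatrix_delete {n : Type*} [Fintype n] [DecidableEq n]
    (A : Matrix n n (ZMod 2)) (hA : IsUnit A) (v : n) (hv : A⁻¹ v v = 1) :
    IsUnit (A.submatrix (Subtype.val : {i : n // i ≠ v} → n) (Subtype.val : {i : n // i ≠ v} → n)) := by
  have hdet : IsUnit A.det := (Matrix.isUnit_iff_isUnit_det _).mp hA
  have hBA : A⁻¹ * A = 1 := Matrix.nonsing_inv_mul A hdet
  rw [← Matrix.mulVec_injective_iff_isUnit]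
  set M := A.submatrix (Subtype.val : {i : n // i ≠ v} → n) (Subtype.val : {i : n // i ≠ v} → n) with hM
  have : ∀ x, M *ᵥ x = 0 → x = 0 := by
    intro x hx
    set y : n → ZMod 2 := fun i => if h : i = v then 0 else x ⟨i, h⟩ with hy
    have hyv : y v = 0 := by simp [hy]
    have hAy : ∀ i (h : i ≠ v), (A *ᵥ y) i = 0 := by
      intro i h
      have hpt : ∀ j : {j : n // j ≠ v}, M ⟨i, h⟩ j * x j = A i j.val * y j.val := by
        intro j
        have hyj : y j.val = x j := by simp [hy, j.prop]
        rw [hyj]; rfl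
      have : (A *ᵥ y) i = (M *ᵥ x) ⟨i, h⟩ := by
        show ∑ j, A i j * y j = ∑ j : {j : n // j ≠ v}, M ⟨i, h⟩ j * x j
        calc ∑ j, A i j * y j
            = A i v * y v + ∑ j ∈ Finset.univ.erase v, A i j * y j :=
              (Finset.add_sum_erase _ _ (Finset.mem_univ v)).symm
          _ = ∑ j ∈ Finset.univ.erase v, A i j * y j := by rw [hyv, mul_zero, zero_add]
          _ = ∑ j : {j : n // j ≠ v}, A i j.val * y j.val :=
              Finset.sum_subtype _ (by simp) _
          _ = ∑ j : {j : n // j ≠ v}, M ⟨i, h⟩ j * x j := by simp_rw [hpt]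
      rw [this, hx]; rfl
    set c := (A *ᵥ y) v with hc
    have hAyc : A *ᵥ y = c • Pi.single v 1 := by
      funext i
      by_cases h : i = v
      · subst h; simp [hc]
      · rw [hAy i h]; simp [Pi.single_apply, h]
    have hyc : y = c • fun i => A⁻¹ i v := by
      have : A⁻¹ *ᵥ (A *ᵥ y) = y := by
        rw [Matrix.mulVec_mulVec, hBA, Matrix.one_mulVec]
      rw [← this, hAyc, Matrix.mulVec_smul, Matrix.mulVec_single]
      funext i; simp
    have hc0 : c = 0 := by
      have := congrFun hyc v
      rw [hyv] at this
      simp only [Pi.smul_apply, smul_eq_mul, hv, mul_one] at this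
      exact this.symm
    have hy0 : y = 0 := by rw [hyc, hc0, zero_smul]
    funext i
    have := congrFun hy0 i.val
    simp only [hy, i.prop, dif_neg, Subtype.coe_eta] at this
    simpa using this
  intro a b hab
  have hd : M *ᵥ (a - b) = 0 := by
    rw [Matrix.mulVec_sub, hab, sub_self]
  exact sub_eq_zero.mp (this _ hd)

lemma closedAdj_isSymm {V : Type*} [Fintype V] (G : SimpleGraph V) :
    (closedAdj G).IsSymm := by
  unfold Matrix.IsSymm
  ext i j
  simp only [closedAdj, Matrix.transpose_apply, Matrix.of_apply]
  congr 1
  exact propext (or_congr eq_comm (G.adj_comm j i))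

lemma closedAdj_diag {V : Type*} [Fintype V] (G : SimpleGraph V) (i : V) :
    closedAdj G i i = 1 := by simp [closedAdj]

lemma closedAdj_induce_eq {V : Type*} [Fintype V] (G : SimpleGraph V) (S : Set V) :
    closedAdj (G.induce S)
      = (closedAdj G).submatrix (fun i : S => (i : V)) (fun i : S => (i : V)) := by
  ext i j
  simp only [closedAdj, Matrix.of_apply, Matrix.submatrix_apply]
  congr 1
  rw [Subtype.ext_iff]
  simp

/-- key step: an always-solvable induced subgraph on a nonempty vertex set has a vertex whose
deletion preserves always-solvability -/
lemma step_lemma {V : Type*} [Fintype V] (G : SimpleGraph V) (S : Set V) (hne : S.Nonempty)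
    (h : IsUnit (closedAdj (G.induce S))) :
    ∃ v ∈ S, IsUnit (closedAdj (G.induce (S \ {v}))) := by
  haveI : Nonempty S := hne.to_subtype
  obtain ⟨v, hv⟩ := exists_inv_diag_one (closedAdj (G.induce S)) (closedAdj_isSymm _)
    (closedAdj_diag _) h
  refine ⟨(v : V), v.prop, ?_⟩
  have hu := isUnit_submatrix_delete (closedAdj (G.induce S)) h v hv
  set e : ↥(S \ {(v : V)}) ≃ {i : ↥S // i ≠ v} :=
    { toFun := fun x => ⟨⟨x.val, x.prop.1⟩, fun hc => x.prop.2 (congrArg Subtype.val hc)⟩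
      invFun := fun y => ⟨y.val.val, ⟨y.val.prop, fun hc => y.prop (Subtype.ext hc)⟩⟩
      left_inv := fun x => rfl
      right_inv := fun y => rfl } with he
  have hmat : closedAdj (G.induce (S \ {(v : V)}))
      = Matrix.reindexAlgEquiv (ZMod 2) (ZMod 2) e.symm
          ((closedAdj (G.induce S)).submatrix
            (Subtype.val : {i : ↥S // i ≠ v} → ↥S) (Subtype.val : {i : ↥S // i ≠ v} → ↥S)) := by
    ext i j
    simp only [Matrix.reindexAlgEquiv_apply, Matrix.reindex_apply, Matrix.submatrix_apply,
      Equiv.symm_symm, closedAdj, Matrix.of_apply]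
    congr 1
    rw [eq_iff_iff]
    constructor
    · rintro (h | h)
      · exact Or.inl (congrArg (fun t => (e t).val) h)
      · exact Or.inr h
    · rintro (h | h)
      · exact Or.inl (e.injective (Subtype.ext h))
      · exact Or.inr h
  rw [hmat]
  exact hu.map (Matrix.reindexAlgEquiv (ZMod 2) (ZMod 2) e.symm)

lemma isUnit_matrix_instIrrel {W : Type*} (i1 i2 : Fintype W) (d1 d2 : DecidableEq W)
    (M : Matrix W W (ZMod 2))
    (h : @IsUnit _ (@MonoidWithZero.toMonoid _ (@Semiring.toMonoidWithZero _
      (@Matrix.semiring W (ZMod 2) _ i1 d1))) M) :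
    @IsUnit _ (@MonoidWithZero.toMonoid _ (@Semiring.toMonoidWithZero _
      (@Matrix.semiring W (ZMod 2) _ i2 d2))) M := by
  cases Subsingleton.elim i1 i2
  cases Subsingleton.elim d1 d2
  exact h

noncomputable def chainSets {V : Type*} [Fintype V] (G : SimpleGraph V) : ℕ → Set V
  | 0 => Set.univ
  | k + 1 =>
    if h : ∃ v ∈ chainSets G k,
        IsUnit (closedAdj (G.induce (chainSets G k \ {v}))) then
      chainSets G k \ {Classical.choose h}
    else chainSets G k

theorem exists_always_solvable_chain {V : Type*} [Fintype V] [Nonempty V]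
    (G : SimpleGraph V) (hG : IsUnit (closedAdj G)) :
    ∃ S : ℕ → Set V,
      S 0 = Set.univ ∧
      (∀ k, k < Fintype.card V →
        Nat.card (S k) = Fintype.card V - k ∧ IsUnit (closedAdj (G.induce (S k)))) ∧
      (∀ k, k + 1 < Fintype.card V → ∃ v ∈ S k, S (k + 1) = S k \ {v}) := by
  have huniv : IsUnit (closedAdj (G.induce (Set.univ : Set V))) := by
    have hmat : closedAdj (G.induce (Set.univ : Set V))
        = Matrix.reindexAlgEquiv (ZMod 2) (ZMod 2) (Equiv.Set.univ V).symm (closedAdj G) := by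
      ext i j
      simp only [Matrix.reindexAlgEquiv_apply, Matrix.reindex_apply, Matrix.submatrix_apply,
        Equiv.symm_symm, closedAdj, Matrix.of_apply]
      congr 1
      rw [eq_iff_iff]
      constructor
      · rintro (h | h)
        · exact Or.inl (congrArg Subtype.val h)
        · exact Or.inr h
      · rintro (h | h)
        · exact Or.inl (Subtype.ext h)
        · exact Or.inr h
    rw [hmat]
    exact hG.map (Matrix.reindexAlgEquiv (ZMod 2) (ZMod 2) (Equiv.Set.univ V).symm)
  have key : ∀ k, k < Fintype.card V →
      Nat.card (chainSets G k) = Fintype.card V - k ∧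
        IsUnit (closedAdj (G.induce (chainSets G k))) := by
    intro k
    induction k with
    | zero =>
      intro _
      refine ⟨?_, isUnit_matrix_instIrrel _ _ _ _ _ huniv⟩
      show Nat.card (Set.univ : Set V) = _
      rw [Nat.card_coe_set_eq, Set.ncard_univ, Nat.sub_zero, Nat.card_eq_fintype_card]
    | succ k ih =>
      intro hk1
      obtain ⟨hcard, hunit⟩ := ih (Nat.lt_of_succ_lt hk1)
      have hne : (chainSets G k).Nonempty := by
        rw [Nat.card_coe_set_eq] at hcard
        rw [← Set.ncard_pos (Set.toFinite _), hcard]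
        omega
      have hE : ∃ v ∈ chainSets G k,
          IsUnit (closedAdj (G.induce (chainSets G k \ {v}))) := by
        obtain ⟨v, h1, h2⟩ := step_lemma G _ hne hunit
        exact ⟨v, h1, isUnit_matrix_instIrrel _ _ _ _ _ h2⟩
      have hdef : chainSets G (k + 1) = chainSets G k \ {Classical.choose hE} := by
        show (if h : _ then _ else _) = _
        rw [dif_pos hE]
      obtain ⟨hm, hu⟩ := Classical.choose_spec hE
      refine ⟨?_, by rw [hdef]; exact isUnit_matrix_instIrrel _ _ _ _ _ hu⟩
      rw [hdef, Nat.card_coe_set_eq, Set.ncard_diff_singleton_of_mem hm,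
        ← Nat.card_coe_set_eq, hcard]
      omega
  refine ⟨chainSets G, rfl, key, ?_⟩
  intro k hk1
  obtain ⟨hcard, hunit⟩ := key k (Nat.lt_of_succ_lt hk1)
  have hne : (chainSets G k).Nonempty := by
    rw [Nat.card_coe_set_eq] at hcard
    rw [← Set.ncard_pos (Set.toFinite _), hcard]
    omega
  have hE : ∃ v ∈ chainSets G k,
      IsUnit (closedAdj (G.induce (chainSets G k \ {v}))) := by
    obtain ⟨v, h1, h2⟩ := step_lemma G _ hne hunit
    exact ⟨v, h1, isUnit_matrix_instIrrel _ _ _ _ _ h2⟩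
  have hdef : chainSets G (k + 1) = chainSets G k \ {Classical.choose hE} := by
    show (if h : _ then _ else _) = _
    rw [dif_pos hE]
  exact ⟨Classical.choose hE, (Classical.choose_spec hE).1, hdef⟩
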